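/- With the s-dependent orthogonal family setup, for every n ≥ 0 and every s > 0, the function s ↦ h_n(s) is differentiable at s and its derivative equals d/ds h_n(s) = 2 ∮_{|z|=1} z · p_n(z, s) · p_n(1/z, s) · exp(s(z + 1/z)) dz/z. -/

import Mathlib

open Polynomial Metric Set Real intervalIntegral MeasureTheory

noncomputable def Bker (m : ℤ) (s : ℝ) : ℂ → ℂ :=
  fun z => z ^ m * Complex.exp (s * (z + z⁻¹)) / z

noncomputable def Bint (m : ℤ) (s : ℝ) : ℂ :=
  ∮ z in C(0, 1), Bker m s z

lemma circleMap_ne_zero' (θ : ℝ) : circleMap 0 1 θ ≠ 0 := by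
  intro h; exact one_ne_zero (circleMap_eq_center_iff.mp h)

lemma sphere_ne_zero {z : ℂ} (hz : z ∈ sphere (0:ℂ) 1) : z ≠ 0 := by
  intro h0
  rw [mem_sphere_zero_iff_norm, h0] at hz
  simp at hz

lemma contOn_Bker (m : ℤ) (s : ℝ) : ContinuousOn (Bker m s) (sphere (0:ℂ) 1) := by
  unfold Bker
  apply ContinuousOn.div
  · apply ContinuousOn.mul
    · exact (continuousOn_id.zpow₀ m (fun z hz => Or.inl (sphere_ne_zero hz)))
    · exact (Complex.continuous_exp.comp_continuousOn
        (continuousOn_const.mul (continuousOn_id.add (continuousOn_id.inv₀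
          fun z hz => sphere_ne_zero hz))))
  · exact continuousOn_id
  · exact fun z hz => sphere_ne_zero hz

lemma circleIntegrable_Bker (m : ℤ) (s : ℝ) : CircleIntegrable (Bker m s) 0 1 :=
  (contOn_Bker m s).circleIntegrable zero_le_one

noncomputable def gker (m : ℤ) (s : ℝ) (θ : ℝ) : ℂ :=
  Complex.I * (circleMap 0 1 θ) ^ m *
    Complex.exp (s * (circleMap 0 1 θ + (circleMap 0 1 θ)⁻¹))

lemma Bint_eq_interval (m : ℤ) (s : ℝ) :
    Bint m s = ∫ θ in (0:ℝ)..(2*π), gker m s θ := by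
  unfold Bint circleIntegral
  refine intervalIntegral.integral_congr fun θ _ => ?_
  have hz := circleMap_ne_zero' θ
  rw [deriv_circleMap, smul_eq_mul]
  unfold Bker gker
  field_simp

lemma gker_periodic (m : ℤ) (s : ℝ) : Function.Periodic (gker m s) (2*π) := by
  intro θ
  unfold gker
  rw [periodic_circleMap]

lemma gker_neg (m : ℤ) (s : ℝ) (θ : ℝ) : gker m s (-θ) = gker (-m) s θ := by
  unfold gker
  have : circleMap 0 1 (-θ) = (circleMap 0 1 θ)⁻¹ := by
    simp only [circleMap_zero]
    push_cast
    rw [neg_mul, Complex.exp_neg, one_mul, one_mul]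
  rw [this, inv_zpow, ← zpow_neg, inv_inv, add_comm]

lemma Bint_even (m : ℤ) (s : ℝ) : Bint m s = Bint (-m) s := by
  rw [Bint_eq_interval, Bint_eq_interval]
  have h1 : (∫ θ in (0:ℝ)..(2*π), gker (-m) s θ) = ∫ θ in (0:ℝ)..(2*π), gker m s (-θ) := by
    refine intervalIntegral.integral_congr fun θ _ => (gker_neg m s θ).symm
  rw [h1, intervalIntegral.integral_comp_neg (fun θ => gker m s θ)]
  have := (gker_periodic m s).intervalIntegral_add_eq (-(2*π)) 0
  simp only [neg_add_cancel, zero_add] at this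
  rw [← this]
  norm_num

lemma gker_continuous (m : ℤ) (s : ℝ) : Continuous (gker m s) := by
  unfold gker
  have hc := continuous_circleMap 0 1
  have h0 : ∀ θ, circleMap 0 1 θ ≠ 0 := circleMap_ne_zero'
  apply Continuous.mul
  · exact continuous_const.mul (hc.zpow₀ m (fun θ => Or.inl (h0 θ)))
  · exact Complex.continuous_exp.comp
      (continuous_const.mul (hc.add (hc.inv₀ h0)))

lemma hasDerivAt_gker (m : ℤ) (θ : ℝ) (x : ℝ) :
    HasDerivAt (fun t : ℝ => gker m t θ)
      (gker m x θ * (circleMap 0 1 θ + (circleMap 0 1 θ)⁻¹)) x := by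
  set z := circleMap 0 1 θ
  set w := z + z⁻¹
  have h1 : HasDerivAt (fun y : ℂ => Complex.exp (y * w)) (Complex.exp (↑x * w) * w) ↑x := by
    simpa using ((hasDerivAt_id (x:ℂ)).mul_const w).cexp
  have h2 := h1.comp_ofReal
  have h3 := h2.const_mul (Complex.I * z ^ m)
  refine (h3.congr_deriv ?_ : HasDerivAt (fun t : ℝ => gker m t θ) _ x)
  unfold gker
  ring

lemma norm_gker_deriv_le (m : ℤ) (θ : ℝ) (x : ℝ) (s : ℝ) (hx : x ∈ ball s 1) :
    ‖gker m x θ * (circleMap 0 1 θ + (circleMap 0 1 θ)⁻¹)‖ ≤ 2 * Real.exp (2 * (|s| + 1)) := by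
  set z := circleMap 0 1 θ with hzdef
  have hz : ‖z‖ = 1 := by rw [hzdef]; simp
  have hzsum : ‖z + z⁻¹‖ ≤ 2 := by
    calc ‖z + z⁻¹‖ ≤ ‖z‖ + ‖z⁻¹‖ := norm_add_le _ _
    _ = 2 := by rw [norm_inv, hz]; norm_num
  have hxs : |x| ≤ |s| + 1 := by
    have := mem_ball_iff_norm.mp hx
    have : |x - s| < 1 := by simpa using this
    calc |x| = |x - s + s| := by ring_nf
    _ ≤ |x - s| + |s| := abs_add_le _ _
    _ ≤ |s| + 1 := by linarith
  have hexp : ‖Complex.exp (↑x * (z + z⁻¹))‖ ≤ Real.exp (2 * (|s| + 1)) := by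
    rw [Complex.norm_exp]
    apply Real.exp_le_exp.mpr
    calc (↑x * (z + z⁻¹)).re ≤ ‖↑x * (z + z⁻¹)‖ := Complex.re_le_norm _
    _ = |x| * ‖z + z⁻¹‖ := by rw [norm_mul, Complex.norm_real, Real.norm_eq_abs]
    _ ≤ (|s| + 1) * 2 := by
        apply mul_le_mul hxs hzsum (norm_nonneg _) (by positivity)
    _ = 2 * (|s| + 1) := by ring
  unfold gker
  rw [norm_mul, norm_mul, norm_mul, Complex.norm_I, norm_zpow, hz, one_zpow, one_mul, one_mul]
  calc ‖Complex.exp (↑x * (z + z⁻¹))‖ * ‖z + z⁻¹‖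
      ≤ Real.exp (2 * (|s| + 1)) * 2 :=
        mul_le_mul hexp hzsum (norm_nonneg _) (Real.exp_pos _).le
  _ = 2 * Real.exp (2 * (|s| + 1)) := by ring

lemma hasDerivAt_Bint_interval (m : ℤ) (s : ℝ) :
    HasDerivAt (fun t : ℝ => ∫ θ in (0:ℝ)..(2*π), gker m t θ)
      (∫ θ in (0:ℝ)..(2*π), gker m s θ * (circleMap 0 1 θ + (circleMap 0 1 θ)⁻¹)) s := by
  have key := intervalIntegral.hasDerivAt_integral_of_dominated_loc_of_deriv_le
    (F := fun t θ => gker m t θ)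
    (F' := fun t θ => gker m t θ * (circleMap 0 1 θ + (circleMap 0 1 θ)⁻¹))
    (x₀ := s) (a := (0:ℝ)) (b := 2*π) (μ := volume)
    (bound := fun _ => 2 * Real.exp (2 * (|s| + 1)))
    (ball_mem_nhds s one_pos)
    (Filter.Eventually.of_forall fun x => ((gker_continuous m x).aestronglyMeasurable).restrict)
    ((gker_continuous m s).intervalIntegrable 0 (2*π))
    (((gker_continuous m s).mul ((continuous_circleMap 0 1).add
      ((continuous_circleMap 0 1).inv₀ circleMap_ne_zero'))).aestronglyMeasurable).restrict
    (Filter.Eventually.of_forall fun θ _ x hx => norm_gker_deriv_le m θ x s hx)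
    (intervalIntegrable_const)
    (Filter.Eventually.of_forall fun θ _ x _ => hasDerivAt_gker m θ x)
  exact key.2

lemma hasDerivAt_Bint (m : ℤ) (s : ℝ) :
    HasDerivAt (fun t : ℝ => Bint m t) (Bint (m+1) s + Bint (m-1) s) s := by
  have h1 := hasDerivAt_Bint_interval m s
  have heq : (fun t : ℝ => ∫ θ in (0:ℝ)..(2*π), gker m t θ) = fun t => Bint m t := by
    funext t; rw [Bint_eq_interval]
  rw [heq] at h1
  convert h1 using 1
  have hptwise : ∀ θ : ℝ, gker m s θ * (circleMap 0 1 θ + (circleMap 0 1 θ)⁻¹)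
      = gker (m+1) s θ + gker (m-1) s θ := by
    intro θ
    have hz := circleMap_ne_zero' θ
    unfold gker
    rw [zpow_add_one₀ hz, zpow_sub_one₀ hz]
    ring
  rw [Bint_eq_interval, Bint_eq_interval,
    ← intervalIntegral.integral_add ((gker_continuous (m+1) s).intervalIntegrable _ _)
      ((gker_continuous (m-1) s).intervalIntegrable _ _)]
  exact intervalIntegral.integral_congr fun θ _ => (hptwise θ).symm

lemma circleIntegral_finset_sum {ι : Type*} (t : Finset ι) (f : ι → ℂ → ℂ)
    (hf : ∀ i ∈ t, CircleIntegrable (f i) 0 1) :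
    (∮ z in C(0,1), ∑ i ∈ t, f i z) = ∑ i ∈ t, ∮ z in C(0,1), f i z := by
  unfold circleIntegral
  rw [← intervalIntegral.integral_finset_sum]
  · exact intervalIntegral.integral_congr fun θ _ => by rw [Finset.smul_sum]
  · exact fun i hi => (hf i hi).out

lemma circleIntegrable_smul_Bker (c : ℂ) (m : ℤ) (s : ℝ) :
    CircleIntegrable (fun z => c • Bker m s z) 0 1 := by
  have h := circleIntegrable_Bker m s
  unfold CircleIntegrable at h ⊢
  simpa [smul_eq_mul] using h.const_mul c

lemma expansion (q r : Polynomial ℂ) {N M : ℕ} (hq : q.natDegree < N) (hr : r.natDegree < M)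
    (a : ℤ) (s : ℝ) :
    (∮ z in C(0,1), z ^ a * (q.eval z * r.eval z⁻¹ * Complex.exp (s*(z+z⁻¹)) / z))
      = ∑ j ∈ Finset.range N, ∑ k ∈ Finset.range M,
          q.coeff j * r.coeff k * Bint (a + j - k) s := by
  have hEq : Set.EqOn (fun z : ℂ => z ^ a * (q.eval z * r.eval z⁻¹ * Complex.exp (s*(z+z⁻¹)) / z))
      (fun z => ∑ j ∈ Finset.range N, ∑ k ∈ Finset.range M,
        (q.coeff j * r.coeff k) • Bker (a + (j:ℤ) - (k:ℤ)) s z) (sphere 0 1) := by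
    intro z hz
    have hz0 := sphere_ne_zero hz
    simp only
    rw [eval_eq_sum_range' hq, eval_eq_sum_range' hr, Finset.sum_mul_sum]
    rw [Finset.sum_mul, Finset.sum_div, Finset.mul_sum]
    refine Finset.sum_congr rfl fun j _ => ?_
    rw [Finset.sum_mul, Finset.sum_div, Finset.mul_sum]
    refine Finset.sum_congr rfl fun k _ => ?_
    unfold Bker
    rw [smul_eq_mul, zpow_sub₀ hz0, zpow_add₀ hz0, zpow_natCast, zpow_natCast]
    field_simp
    rw [mul_assoc, ← mul_pow, one_div_mul_cancel hz0, one_pow, mul_one]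
  rw [circleIntegral.integral_congr zero_le_one hEq]
  have hint : ∀ (j : ℕ), j ∈ Finset.range N → CircleIntegrable
      (fun z => ∑ k ∈ Finset.range M, (q.coeff j * r.coeff k) • Bker (a + (j:ℤ) - (k:ℤ)) s z)
      0 1 := by
    intro j _
    have h2 : (fun θ : ℝ => ∑ k ∈ Finset.range M,
        (q.coeff j * r.coeff k) • Bker (a + (j:ℤ) - (k:ℤ)) s (circleMap 0 1 θ))
        = ∑ k ∈ Finset.range M, fun θ : ℝ =>
        (q.coeff j * r.coeff k) • Bker (a + (j:ℤ) - (k:ℤ)) s (circleMap 0 1 θ) := by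
      funext θ; simp
    show IntervalIntegrable _ volume 0 (2*π)
    rw [h2]
    exact IntervalIntegrable.sum _ fun k _ => (circleIntegrable_smul_Bker _ _ _)
  rw [circleIntegral_finset_sum _ _ hint]
  refine Finset.sum_congr rfl fun j _ => ?_
  rw [circleIntegral_finset_sum _ _ (fun k _ => circleIntegrable_smul_Bker _ _ _)]
  refine Finset.sum_congr rfl fun k _ => ?_
  rw [circleIntegral.integral_smul, smul_eq_mul]
  rfl

lemma circleIntegral_add {f g : ℂ → ℂ} (hf : CircleIntegrable f 0 1)
    (hg : CircleIntegrable g 0 1) :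
    (∮ z in C(0,1), (f z + g z)) = (∮ z in C(0,1), f z) + ∮ z in C(0,1), g z := by
  unfold circleIntegral
  rw [← intervalIntegral.integral_add hf.out hg.out]
  exact intervalIntegral.integral_congr fun θ _ => by rw [smul_add]

lemma vanish_aux (L : Polynomial ℂ → ℂ)
    (hadd : ∀ q₁ q₂ : Polynomial ℂ, L (q₁ + q₂) = L q₁ + L q₂)
    (hsmul : ∀ (c : ℂ) (q : Polynomial ℂ), L (Polynomial.C c * q) = c * L q)
    (hzero : L 0 = 0)
    (P : ℕ → Polynomial ℂ) (n : ℕ)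
    (hPm : ∀ m, m < n → (P m).Monic) (hPd : ∀ m, m < n → (P m).natDegree = m)
    (horth : ∀ m, m < n → L (P m) = 0) :
    ∀ N : ℕ, N ≤ n → ∀ q : Polynomial ℂ, q.degree < (N : ℕ) → L q = 0 := by
  intro N
  induction N with
  | zero =>
    intro _ q hq
    have : q = 0 := Polynomial.degree_eq_bot.mp (Nat.WithBot.lt_zero_iff.mp (by exact_mod_cast hq))
    rw [this, hzero]
  | succ N ih =>
    intro hN1 q hq
    have hNn : N < n := hN1
    set c := q.coeff N with hc
    set q' := q - Polynomial.C c * P N with hq'def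
    have hq' : q'.degree < (N : ℕ) := by
      rw [Polynomial.degree_lt_iff_coeff_zero]
      intro m hm
      have hm' : N ≤ m := by exact_mod_cast hm
      rw [hq'def, Polynomial.coeff_sub, Polynomial.coeff_C_mul]
      rcases eq_or_lt_of_le hm' with heq | hlt
      · have h1 : (P N).coeff m = 1 := by
          have := (hPm N hNn).coeff_natDegree
          rw [hPd N hNn] at this
          rw [← heq]
          exact this
        have h2 : q.coeff m = c := by rw [hc, heq]
        rw [h1, h2, mul_one, sub_self]
      · have h1 : q.coeff m = 0 := by
          apply Polynomial.coeff_eq_zero_of_degree_lt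
          refine lt_of_lt_of_le hq ?_
          exact_mod_cast Nat.succ_le_of_lt hlt
        have h2 : (P N).coeff m = 0 := by
          apply Polynomial.coeff_eq_zero_of_natDegree_lt
          rw [hPd N hNn]; exact hlt
        rw [h1, h2, mul_zero, sub_zero]
    have hdecomp : q = q' + Polynomial.C c * P N := by
      rw [hq'def]; ring
    rw [hdecomp, hadd, hsmul, ih (le_of_lt hNn) q' hq', horth N hNn, mul_zero, add_zero]

lemma circleIntegrable_poly (q r : Polynomial ℂ) (s : ℝ) :
    CircleIntegrable (fun z : ℂ => q.eval z * r.eval z⁻¹ * Complex.exp (s*(z+z⁻¹)) / z) 0 1 := by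
  apply ContinuousOn.circleIntegrable zero_le_one
  apply ContinuousOn.div _ continuousOn_id (fun z hz => sphere_ne_zero hz)
  apply ContinuousOn.mul
  · apply ContinuousOn.mul
    · exact (Polynomial.continuous q).continuousOn
    · exact (Polynomial.continuous r).comp_continuousOn
        (continuousOn_id.inv₀ fun z hz => sphere_ne_zero hz)
  · exact Complex.continuous_exp.comp_continuousOn
      (continuousOn_const.mul (continuousOn_id.add (continuousOn_id.inv₀
        fun z hz => sphere_ne_zero hz)))

lemma Lleft_add (r : Polynomial ℂ) (s : ℝ) (q₁ q₂ : Polynomial ℂ) :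
    (∮ z in C(0,1), (q₁+q₂).eval z * r.eval z⁻¹ * Complex.exp (s*(z+z⁻¹)) / z)
    = (∮ z in C(0,1), q₁.eval z * r.eval z⁻¹ * Complex.exp (s*(z+z⁻¹)) / z)
    + (∮ z in C(0,1), q₂.eval z * r.eval z⁻¹ * Complex.exp (s*(z+z⁻¹)) / z) := by
  rw [← circleIntegral_add (circleIntegrable_poly q₁ r s) (circleIntegrable_poly q₂ r s)]
  refine circleIntegral.integral_congr zero_le_one fun z hz => ?_
  simp only [Polynomial.eval_add]
  ring

lemma Lleft_smul (r : Polynomial ℂ) (s : ℝ) (c : ℂ) (q : Polynomial ℂ) :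
    (∮ z in C(0,1), (Polynomial.C c * q).eval z * r.eval z⁻¹ * Complex.exp (s*(z+z⁻¹)) / z)
    = c * (∮ z in C(0,1), q.eval z * r.eval z⁻¹ * Complex.exp (s*(z+z⁻¹)) / z) := by
  have : (∮ z in C(0,1), (Polynomial.C c * q).eval z * r.eval z⁻¹ * Complex.exp (s*(z+z⁻¹)) / z)
      = (∮ z in C(0,1), c • (q.eval z * r.eval z⁻¹ * Complex.exp (s*(z+z⁻¹)) / z)) := by
    refine circleIntegral.integral_congr zero_le_one fun z hz => ?_
    simp only [Polynomial.eval_mul, Polynomial.eval_C, smul_eq_mul]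
    ring
  rw [this, circleIntegral.integral_smul, smul_eq_mul]

lemma Lright_add (r : Polynomial ℂ) (s : ℝ) (q₁ q₂ : Polynomial ℂ) :
    (∮ z in C(0,1), r.eval z * (q₁+q₂).eval z⁻¹ * Complex.exp (s*(z+z⁻¹)) / z)
    = (∮ z in C(0,1), r.eval z * q₁.eval z⁻¹ * Complex.exp (s*(z+z⁻¹)) / z)
    + (∮ z in C(0,1), r.eval z * q₂.eval z⁻¹ * Complex.exp (s*(z+z⁻¹)) / z) := by
  rw [← circleIntegral_add (circleIntegrable_poly r q₁ s) (circleIntegrable_poly r q₂ s)]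
  refine circleIntegral.integral_congr zero_le_one fun z hz => ?_
  simp only [Polynomial.eval_add]
  ring

lemma Lright_smul (r : Polynomial ℂ) (s : ℝ) (c : ℂ) (q : Polynomial ℂ) :
    (∮ z in C(0,1), r.eval z * (Polynomial.C c * q).eval z⁻¹ * Complex.exp (s*(z+z⁻¹)) / z)
    = c * (∮ z in C(0,1), r.eval z * q.eval z⁻¹ * Complex.exp (s*(z+z⁻¹)) / z) := by
  have : (∮ z in C(0,1), r.eval z * (Polynomial.C c * q).eval z⁻¹ * Complex.exp (s*(z+z⁻¹)) / z)
      = (∮ z in C(0,1), c • (r.eval z * q.eval z⁻¹ * Complex.exp (s*(z+z⁻¹)) / z)) := by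
    refine circleIntegral.integral_congr zero_le_one fun z hz => ?_
    simp only [Polynomial.eval_mul, Polynomial.eval_C, smul_eq_mul]
    ring
  rw [this, circleIntegral.integral_smul, smul_eq_mul]

lemma Lzero_left (r : Polynomial ℂ) (s : ℝ) :
    (∮ z in C(0,1), (0 : Polynomial ℂ).eval z * r.eval z⁻¹ * Complex.exp (s*(z+z⁻¹)) / z) = 0 := by
  have : (fun z : ℂ => (0 : Polynomial ℂ).eval z * r.eval z⁻¹ * Complex.exp (s*(z+z⁻¹)) / z)
      = fun _ => (0:ℂ) := by
    funext z; simp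
  rw [this]
  simp [circleIntegral]

lemma Lzero_right (r : Polynomial ℂ) (s : ℝ) :
    (∮ z in C(0,1), r.eval z * (0 : Polynomial ℂ).eval z⁻¹ * Complex.exp (s*(z+z⁻¹)) / z) = 0 := by
  have : (fun z : ℂ => r.eval z * (0 : Polynomial ℂ).eval z⁻¹ * Complex.exp (s*(z+z⁻¹)) / z)
      = fun _ => (0:ℂ) := by
    funext z; simp
  rw [this]
  simp [circleIntegral]

theorem stmt_12
    (p : ℕ → ℝ → Polynomial ℂ)
    (hmonic : ∀ n s, 0 < s → (p n s).Monic)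
    (hdeg : ∀ n s, 0 < s → (p n s).natDegree = n)
    (hreal : ∀ n s, 0 < s → ∀ k, ((p n s).coeff k).im = 0)
    (hp0 : ∀ n s, 0 < s → (p n s).coeff 0 ≠ 0)
    (horth : ∀ (n m : ℕ) (s : ℝ), 0 < s → n ≠ m →
      (∮ z in C(0, 1), (p n s).eval z * (p m s).eval z⁻¹ *
        Complex.exp (s * (z + z⁻¹)) / z) = 0)
    (h : ℕ → ℝ → ℂ)
    (hh : ∀ (n : ℕ) (s : ℝ), 0 < s → h n s =
      ∮ z in C(0, 1), (p n s).eval z * (p n s).eval z⁻¹ *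
        Complex.exp (s * (z + z⁻¹)) / z)
    (hne : ∀ (n : ℕ) (s : ℝ), 0 < s → h n s ≠ 0)
    (hcoeffdiff : ∀ (n k : ℕ), k ≤ n →
      DifferentiableOn ℝ (fun s => (p n s).coeff k) (Set.Ioi (0 : ℝ)))
    (n : ℕ) (s : ℝ) (hs : 0 < s) :
    HasDerivAt (fun t => h n t)
      (2 * ∮ z in C(0, 1), z * (p n s).eval z * (p n s).eval z⁻¹ *
        Complex.exp (s * (z + z⁻¹)) / z) s := by
  classical
  set N := n + 1 with hN
  set A : ℕ → ℝ → ℂ := fun j t => (p n t).coeff j with hA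
  set d : ℕ → ℂ := fun j => deriv (fun t => (p n t).coeff j) s with hd
  -- coefficient derivatives
  have hADeriv : ∀ j, j < N → HasDerivAt (fun t => A j t) (d j) s := by
    intro j hj
    have := (hcoeffdiff n j (Nat.lt_succ_iff.mp hj)).differentiableAt
      (Ioi_mem_nhds hs)
    exact this.hasDerivAt
  -- the sum representation of h n
  have hrep : ∀ t : ℝ, 0 < t →
      h n t = ∑ j ∈ Finset.range N, ∑ k ∈ Finset.range N,
        A j t * A k t * Bint ((j:ℤ) - k) t := by
    intro t ht
    have hfun : (fun z : ℂ => (p n t).eval z * (p n t).eval z⁻¹ *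
        Complex.exp (t * (z + z⁻¹)) / z)
        = fun z : ℂ => z ^ (0:ℤ) * ((p n t).eval z * (p n t).eval z⁻¹ *
        Complex.exp (t * (z + z⁻¹)) / z) := by
      funext z; rw [zpow_zero, one_mul]
    have hdlt : (p n t).natDegree < N := by rw [hdeg n t ht]; omega
    rw [hh n t ht]
    calc (∮ z in C(0, 1), (p n t).eval z * (p n t).eval z⁻¹ * Complex.exp (t * (z + z⁻¹)) / z)
        = (∮ z in C(0, 1), z ^ (0:ℤ) * ((p n t).eval z * (p n t).eval z⁻¹ *
            Complex.exp (t * (z + z⁻¹)) / z)) := by rw [hfun]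
      _ = ∑ j ∈ Finset.range N, ∑ k ∈ Finset.range N,
            (p n t).coeff j * (p n t).coeff k * Bint (0 + j - k) t :=
          expansion (p n t) (p n t) hdlt hdlt 0 t
      _ = ∑ j ∈ Finset.range N, ∑ k ∈ Finset.range N,
            A j t * A k t * Bint ((j:ℤ) - k) t := by
          refine Finset.sum_congr rfl fun j _ => Finset.sum_congr rfl fun k _ => ?_
          rw [zero_add]
  -- derivative of the sum representation
  have hG : HasDerivAt (fun t => ∑ j ∈ Finset.range N, ∑ k ∈ Finset.range N,
      A j t * A k t * Bint ((j:ℤ) - k) t)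
      (∑ j ∈ Finset.range N, ∑ k ∈ Finset.range N,
        ((d j * A k s + A j s * d k) * Bint ((j:ℤ) - k) s
          + A j s * A k s * (Bint ((j:ℤ) - k + 1) s + Bint ((j:ℤ) - k - 1) s))) s := by
    refine HasDerivAt.fun_sum fun j hj => HasDerivAt.fun_sum fun k hk => ?_
    exact ((hADeriv j (Finset.mem_range.mp hj)).mul (hADeriv k (Finset.mem_range.mp hk))).mul (hasDerivAt_Bint ((j:ℤ) - k) s)
  have hmain : HasDerivAt (fun t => h n t)
      (∑ j ∈ Finset.range N, ∑ k ∈ Finset.range N,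
        ((d j * A k s + A j s * d k) * Bint ((j:ℤ) - k) s
          + A j s * A k s * (Bint ((j:ℤ) - k + 1) s + Bint ((j:ℤ) - k - 1) s))) s := by
    refine hG.congr_of_eventuallyEq ?_
    filter_upwards [Ioi_mem_nhds hs] with t ht
    exact hrep t ht
  -- now identify the derivative value
  -- the polynomial of coefficient derivatives
  set q' : Polynomial ℂ := ∑ j ∈ Finset.range N, Polynomial.C (d j) * Polynomial.X ^ j
    with hq'
  have hq'coeff : ∀ k : ℕ, q'.coeff k = if k < N then d k else 0 := by
    intro k
    rw [hq', Polynomial.finset_sum_coeff]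
    simp only [Polynomial.coeff_C_mul, Polynomial.coeff_X_pow, mul_ite, mul_one, mul_zero]
    rw [Finset.sum_ite_eq (Finset.range N) k d]
    simp [Finset.mem_range]
  have hdn : d n = 0 := by
    have hev : (fun t => (p n t).coeff n) =ᶠ[nhds s] fun _ => (1:ℂ) := by
      filter_upwards [Ioi_mem_nhds hs] with t ht
      have := (hmonic n t ht).coeff_natDegree
      rwa [hdeg n t ht] at this
    rw [hd]
    simp only
    rw [hev.deriv_eq, deriv_const]
  have hq'deg : q'.degree < (n : ℕ) := by
    rw [Polynomial.degree_lt_iff_coeff_zero]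
    intro m hm
    have hm' : n ≤ m := by exact_mod_cast hm
    rw [hq'coeff]
    rcases eq_or_lt_of_le hm' with heq | hlt
    · rw [← heq, if_pos (by omega), ← heq] at *
      exact hdn
    · rw [if_neg (by omega)]
  have hq'natdeg : q'.natDegree < N := by
    by_cases h0 : q' = 0
    · rw [h0]; simp [hN]
    · rw [← Polynomial.natDegree_lt_iff_degree_lt h0] at hq'deg
      omega
  have hpdeg : (p n s).natDegree < N := by rw [hdeg n s hs]; omega
  -- vanishing of the two derivative-coefficient sums
  have hvanL : (∮ z in C(0,1), q'.eval z * (p n s).eval z⁻¹ *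
      Complex.exp (s*(z+z⁻¹)) / z) = 0 := by
    refine vanish_aux (fun q => ∮ z in C(0,1), q.eval z * (p n s).eval z⁻¹ *
        Complex.exp (s*(z+z⁻¹)) / z)
      (Lleft_add (p n s) s) (Lleft_smul (p n s) s) (Lzero_left (p n s) s)
      (fun m => p m s) n (fun m hm => hmonic m s hs) (fun m hm => hdeg m s hs)
      (fun m hm => horth m n s hs (Nat.ne_of_lt hm)) n le_rfl q' hq'deg
  have hvanR : (∮ z in C(0,1), (p n s).eval z * q'.eval z⁻¹ *
      Complex.exp (s*(z+z⁻¹)) / z) = 0 := by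
    refine vanish_aux (fun q => ∮ z in C(0,1), (p n s).eval z * q.eval z⁻¹ *
        Complex.exp (s*(z+z⁻¹)) / z)
      (Lright_add (p n s) s) (Lright_smul (p n s) s) (Lzero_right (p n s) s)
      (fun m => p m s) n (fun m hm => hmonic m s hs) (fun m hm => hdeg m s hs)
      (fun m hm => horth n m s hs (Nat.ne_of_lt hm).symm) n le_rfl q' hq'deg
  -- sum forms of the vanishing statements
  have hS1 : (∑ j ∈ Finset.range N, ∑ k ∈ Finset.range N,
      d j * A k s * Bint ((j:ℤ) - k) s) = 0 := by
    have e1 := expansion q' (p n s) hq'natdeg hpdeg 0 s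
    have hfun : (fun z : ℂ => q'.eval z * (p n s).eval z⁻¹ *
        Complex.exp (s * (z + z⁻¹)) / z)
        = fun z : ℂ => z ^ (0:ℤ) * (q'.eval z * (p n s).eval z⁻¹ *
        Complex.exp (s * (z + z⁻¹)) / z) := by
      funext z; rw [zpow_zero, one_mul]
    rw [hfun] at hvanL
    rw [e1] at hvanL
    rw [← hvanL]
    refine Finset.sum_congr rfl fun j hj => Finset.sum_congr rfl fun k _ => ?_
    rw [hq'coeff, if_pos (Finset.mem_range.mp hj), zero_add]
  have hS2 : (∑ j ∈ Finset.range N, ∑ k ∈ Finset.range N,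
      A j s * d k * Bint ((j:ℤ) - k) s) = 0 := by
    have e2 := expansion (p n s) q' hpdeg hq'natdeg 0 s
    have hfun : (fun z : ℂ => (p n s).eval z * q'.eval z⁻¹ *
        Complex.exp (s * (z + z⁻¹)) / z)
        = fun z : ℂ => z ^ (0:ℤ) * ((p n s).eval z * q'.eval z⁻¹ *
        Complex.exp (s * (z + z⁻¹)) / z) := by
      funext z; rw [zpow_zero, one_mul]
    rw [hfun] at hvanR
    rw [e2] at hvanR
    rw [← hvanR]
    refine Finset.sum_congr rfl fun j _ => Finset.sum_congr rfl fun k hk => ?_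
    rw [hq'coeff, if_pos (Finset.mem_range.mp hk), zero_add]
  -- the z-shifted sum
  have hS3 : (∮ z in C(0, 1), z * (p n s).eval z * (p n s).eval z⁻¹ *
        Complex.exp (s * (z + z⁻¹)) / z)
      = ∑ j ∈ Finset.range N, ∑ k ∈ Finset.range N,
        A j s * A k s * Bint ((j:ℤ) - k + 1) s := by
    have e3 := expansion (p n s) (p n s) hpdeg hpdeg 1 s
    have hfun : (fun z : ℂ => z * (p n s).eval z * (p n s).eval z⁻¹ *
        Complex.exp (s * (z + z⁻¹)) / z)
        = fun z : ℂ => z ^ (1:ℤ) * ((p n s).eval z * (p n s).eval z⁻¹ *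
        Complex.exp (s * (z + z⁻¹)) / z) := by
      funext z; rw [zpow_one]; ring
    rw [hfun, e3]
    refine Finset.sum_congr rfl fun j _ => Finset.sum_congr rfl fun k _ => ?_
    rw [show (1 + (j:ℤ) - k) = ((j:ℤ) - k + 1) by ring]
  have hS3b : (∑ j ∈ Finset.range N, ∑ k ∈ Finset.range N,
      A j s * A k s * Bint ((j:ℤ) - k - 1) s)
      = ∑ j ∈ Finset.range N, ∑ k ∈ Finset.range N,
        A j s * A k s * Bint ((j:ℤ) - k + 1) s := by
    have h1 : ∀ j k : ℕ, Bint ((j:ℤ) - k - 1) s = Bint ((k:ℤ) - j + 1) s := by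
      intro j k
      rw [Bint_even]
      congr 1
      ring
    calc (∑ j ∈ Finset.range N, ∑ k ∈ Finset.range N,
        A j s * A k s * Bint ((j:ℤ) - k - 1) s)
        = ∑ j ∈ Finset.range N, ∑ k ∈ Finset.range N,
          A j s * A k s * Bint ((k:ℤ) - j + 1) s := by
          refine Finset.sum_congr rfl fun j _ => Finset.sum_congr rfl fun k _ => ?_
          rw [h1]
      _ = ∑ k ∈ Finset.range N, ∑ j ∈ Finset.range N,
          A j s * A k s * Bint ((k:ℤ) - j + 1) s := Finset.sum_comm
      _ = ∑ j ∈ Finset.range N, ∑ k ∈ Finset.range N,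
          A j s * A k s * Bint ((j:ℤ) - k + 1) s := by
          refine Finset.sum_congr rfl fun j _ => Finset.sum_congr rfl fun k _ => ?_
          ring
  -- final assembly
  convert hmain using 1
  calc (2 : ℂ) * (∮ z in C(0, 1), z * (p n s).eval z * (p n s).eval z⁻¹ *
        Complex.exp (s * (z + z⁻¹)) / z)
      = (∑ j ∈ Finset.range N, ∑ k ∈ Finset.range N, d j * A k s * Bint ((j:ℤ) - k) s)
      + (∑ j ∈ Finset.range N, ∑ k ∈ Finset.range N, A j s * d k * Bint ((j:ℤ) - k) s)
      + ((∑ j ∈ Finset.range N, ∑ k ∈ Finset.range N,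
            A j s * A k s * Bint ((j:ℤ) - k + 1) s)
        + (∑ j ∈ Finset.range N, ∑ k ∈ Finset.range N,
            A j s * A k s * Bint ((j:ℤ) - k - 1) s)) := by
        rw [hS1, hS2, hS3, hS3b]; ring
    _ = ∑ j ∈ Finset.range N, ∑ k ∈ Finset.range N,
        ((d j * A k s + A j s * d k) * Bint ((j:ℤ) - k) s
          + A j s * A k s * (Bint ((j:ℤ) - k + 1) s + Bint ((j:ℤ) - k - 1) s)) := by
        rw [← Finset.sum_add_distrib, ← Finset.sum_add_distrib, ← Finset.sum_add_distrib]
        refine Finset.sum_congr rfl fun j _ => ?_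
        rw [← Finset.sum_add_distrib, ← Finset.sum_add_distrib, ← Finset.sum_add_distrib]
        refine Finset.sum_congr rfl fun k _ => ?_
        ring
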